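/- arXiv:1410.5867 — 2 statements merged into one kernel-verified Lean document; each statement's English description precedes it below -/
import Mathlib

section
/- The unique positive real solution (r, s, p, q) with r > 8 of the system r² - 8r - 4s - 4p - 4q - 4 = 0, r·s - 4r - 2s - 2p - 2q - 2 = 0, r·p - 2r - s - p - q - 1 = 0, r·q - r - s - p - q - 1 = 0 is (r, s, p, q) = (12, 6, 3, 2). -/
theorem stmt_4 (r s p q : ℝ) (hr : 0 < r) (hs : 0 < s) (hp : 0 < p) (hq : 0 < q)
    (hr8 : r > 8)
    (h1 : r ^ 2 - 8 * r - 4 * s - 4 * p - 4 * q - 4 = 0)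
    (h2 : r * s - 4 * r - 2 * s - 2 * p - 2 * q - 2 = 0)
    (h3 : r * p - 2 * r - s - p - q - 1 = 0)
    (h4 : r * q - r - s - p - q - 1 = 0) :
    r = 12 ∧ s = 6 ∧ p = 3 ∧ q = 2 := by
  have hrne : r ≠ 0 := ne_of_gt hr
  have e1 : r * (r - 2 * s) = 0 := by nlinarith [h1, h2]
  have hrs : r = 2 * s := by
    have := mul_eq_zero.mp e1
    rcases this with h | h
    · exact absurd h hrne
    · linarith
  have e2 : r * (s - 2 * p) = 0 := by nlinarith [h2, h3]
  have hsp : s = 2 * p := by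
    rcases mul_eq_zero.mp e2 with h | h
    · exact absurd h hrne
    · linarith
  have e3 : r * (p - q - 1) = 0 := by nlinarith [h3, h4]
  have hpq : q = p - 1 := by
    rcases mul_eq_zero.mp e3 with h | h
    · exact absurd h hrne
    · linarith
  have hr4p : r = 4 * p := by linarith
  have hp3 : p = 3 := by
    have : 16 * p ^ 2 - 48 * p = 0 := by nlinarith [h1]
    have : 16 * p * (p - 3) = 0 := by nlinarith
    rcases mul_eq_zero.mp this with h | h
    · nlinarith
    · linarith
  refine ⟨by linarith, by linarith, hp3, by linarith⟩
end

section
/- Let f : ℝ → ℝ be three times continuously differentiable near a simple zero α (f(α)=0, f'(α)≠0), β ≠ 0, and define w(x) = x - β f(x) and y(x) = x - β f(x)² / (f(x) - f(w(x))) for x near α, x ≠ α. Then y(x) - α = (1 - β f'(α)) c₂ (x - α)² + O((x - α)³) as x → α, where c₂ = f''(α)/(2 f'(α)). In particular the Steffensen-like step converges with order at least 2, and if β = 1/f'(α) the quadratic error coefficient vanishes. -/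
open Asymptotics Filter

set_option maxHeartbeats 2000000


lemma abs_sub_le_of_mem_uIcc {a x t : ℝ} (ht : t ∈ Set.uIcc a x) : |t - a| ≤ |x - a| := by
  rcases Set.mem_uIcc.1 ht with ⟨h1, h2⟩ | ⟨h1, h2⟩ <;> rw [abs_le] <;>
    constructor <;>
    nlinarith [le_abs_self (x - a), neg_abs_le (x - a), abs_nonneg (x - a)]

lemma mvt_bigO {h h' : ℝ → ℝ} {α : ℝ} {k : ℕ}
    (hd : ∀ᶠ x in nhds α, HasDerivAt h (h' x) x) (h0 : h α = 0)
    (hO : h' =O[nhds α] fun x => (x - α) ^ k) :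
    h =O[nhds α] fun x => (x - α) ^ (k + 1) := by
  obtain ⟨c, hc0, hc⟩ := hO.exists_pos
  have hb := hc.bound
  obtain ⟨ε, hε, hball⟩ := Metric.eventually_nhds_iff.1 (hd.and hb)
  rw [isBigO_iff]
  refine ⟨c, Metric.eventually_nhds_iff.2 ⟨ε, hε, fun x hx => ?_⟩⟩
  have hmem : ∀ t ∈ Set.uIcc α x, dist t α < ε := by
    intro t ht
    have := abs_sub_le_of_mem_uIcc ht
    rw [Real.dist_eq] at *
    exact lt_of_le_of_lt this hx
  have key := (convex_uIcc α x).norm_image_sub_le_of_norm_hasDerivWithin_le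
    (f := h) (f' := h') (C := c * |x - α| ^ k)
    (fun t ht => ((hball (hmem t ht)).1).hasDerivWithinAt)
    (fun t ht => by
      have h1 := (hball (hmem t ht)).2
      have h2 := abs_sub_le_of_mem_uIcc ht
      calc ‖h' t‖ ≤ c * ‖(t - α) ^ k‖ := h1
        _ = c * |t - α| ^ k := by rw [Real.norm_eq_abs, abs_pow]
        _ ≤ c * |x - α| ^ k := by gcongr)
    Set.left_mem_uIcc Set.right_mem_uIcc
  rw [h0, sub_zero] at key
  calc ‖h x‖ ≤ c * |x - α| ^ k * ‖x - α‖ := key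
    _ = c * ‖(x - α) ^ (k + 1)‖ := by
        rw [Real.norm_eq_abs, Real.norm_eq_abs, abs_pow]; ring

lemma pointwise_est (a b β C Cg Ch e F H Gx Gw : ℝ)
    (ha : a ≠ 0) (hβ : β ≠ 0)
    (hCa : C * a = (1 - β * a) * b)
    (hF : F = a * e + b * e ^ 2 + Gx)
    (hH : H = a * (e - β * F) + b * (e - β * F) ^ 2 + Gw)
    (hGx : |Gx| ≤ Cg * |e| ^ 3) (hGw : |Gw| ≤ Ch * |e| ^ 3)
    (hCg : 0 ≤ Cg) (hCh : 0 ≤ Ch)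
    (he : e ≠ 0)
    (q1 : |e| ≤ 1)
    (q2 : (|b| + Cg) * |e| ≤ |a| / 2)
    (q3 : |b| * (2 + 2 * |a| * |β|) * |e| ≤ |a| / 2)
    (q4 : (Cg + Ch) * |e| ^ 2 ≤ |β| * a ^ 2 / 8) :
    |e - C * e ^ 2 - β * F ^ 2 / (F - H)| ≤
      ((|β| * (2 * |a|) * (|β| * b ^ 2 + |β| * |b| * Cg + Cg + |C| * |b| * (2 + 2 * |a| * |β|))
          + (1 + |C|) * (Cg + Ch)) / (|β| * a ^ 2 / 8)) * |e| ^ 3 := by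
  set K₁ : ℝ := |β| * b ^ 2 + |β| * |b| * Cg + Cg + |C| * |b| * (2 + 2 * |a| * |β|) with hK₁def
  set K₂ : ℝ := |β| * (2 * |a|) * K₁ + (1 + |C|) * (Cg + Ch) with hK₂def
  have habs_e : 0 < |e| := abs_pos.2 he
  have ha' : 0 < |a| := abs_pos.2 ha
  have hβ' : 0 < |β| := abs_pos.2 hβ
  have hsq : |a| ^ 2 = a ^ 2 := sq_abs a
  have ha2 : 0 < a ^ 2 := by nlinarith
  have he3 : |e| ^ 3 ≤ |e| ^ 2 := by nlinarith [abs_nonneg e]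
  have he2 : |e| ^ 2 ≤ |e| := by nlinarith [abs_nonneg e]
  -- F bounds
  have hFa : |F - a * e| ≤ |a| / 2 * |e| := by
    have h1 : |F - a * e| = |b * e ^ 2 + Gx| := by rw [hF]; ring_nf
    rw [h1]
    calc |b * e ^ 2 + Gx| ≤ |b| * |e| ^ 2 + Cg * |e| ^ 3 := by
          refine (abs_add_le _ _).trans ?_
          gcongr
          rw [abs_mul, abs_pow]
      _ ≤ (|b| + Cg) * |e| ^ 2 := by nlinarith [abs_nonneg b]
      _ = ((|b| + Cg) * |e|) * |e| := by ring
      _ ≤ |a| / 2 * |e| := by gcongr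
  have haem : |a * e| = |a| * |e| := abs_mul a e
  have hFub : |F| ≤ 2 * |a| * |e| := by
    have := abs_add_le (a * e) (F - a * e)
    simp only [add_sub_cancel] at this
    nlinarith
  have hFlb : |a| / 2 * |e| ≤ |F| := by
    have h1 : |a * e| ≤ |F| + |F - a * e| := by
      have := abs_add_le F (a * e - F)
      simp only [add_sub_cancel] at this
      rw [abs_sub_comm F (a * e)]
      linarith [this]
    nlinarith
  -- denominator
  have hDrep : F - H = β * F * (a + b * (2 * e - β * F)) + (Gx - Gw) := by
    rw [hH]; linear_combination hF
  have hA : |a| / 2 ≤ |a + b * (2 * e - β * F)| := by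
    have h1 : |b * (2 * e - β * F)| ≤ |b| * (2 + 2 * |a| * |β|) * |e| := by
      rw [abs_mul]
      have h2 : |2 * e - β * F| ≤ 2 * |e| + |β| * (2 * |a| * |e|) := by
        calc |2 * e - β * F| ≤ |2 * e| + |β * F| := abs_sub _ _
          _ ≤ 2 * |e| + |β| * (2 * |a| * |e|) := by
              rw [abs_mul, abs_mul]
              gcongr <;> norm_num
      nlinarith [abs_nonneg b, abs_nonneg e]
    have h3 : |a| ≤ |a + b * (2 * e - β * F)| + |b * (2 * e - β * F)| := by
      have := abs_add_le (a + b * (2 * e - β * F)) (-(b * (2 * e - β * F)))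
      simpa using this
    linarith
  have hGG : |Gx - Gw| ≤ |β| * a ^ 2 / 8 * |e| := by
    calc |Gx - Gw| ≤ |Gx| + |Gw| := abs_sub _ _
      _ ≤ (Cg + Ch) * |e| ^ 3 := by nlinarith
      _ = ((Cg + Ch) * |e| ^ 2) * |e| := by ring
      _ ≤ |β| * a ^ 2 / 8 * |e| := by gcongr
  have hDlb : |β| * a ^ 2 / 8 * |e| ≤ |F - H| := by
    have h1 : |β| * (|a| / 2 * |e|) * (|a| / 2) ≤ |β * F * (a + b * (2 * e - β * F))| := by
      rw [abs_mul, abs_mul]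
      gcongr
    have h2 : |β * F * (a + b * (2 * e - β * F))| ≤ |F - H| + |Gx - Gw| := by
      calc |β * F * (a + b * (2 * e - β * F))| = |(F - H) - (Gx - Gw)| := by
            rw [hDrep]; ring_nf
        _ ≤ |F - H| + |Gx - Gw| := abs_sub _ _
    have hrw : |β| * (|a| / 2 * |e|) * (|a| / 2) = |β| * a ^ 2 / 4 * |e| := by
      rw [← hsq]; ring
    rw [hrw] at h1
    linarith
  have hDne : F - H ≠ 0 := by
    intro h0
    rw [h0, abs_zero] at hDlb
    have : 0 < |β| * a ^ 2 / 8 * |e| := by positivity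
    linarith
  -- K bound
  have hKid : (e - C * e ^ 2) * (a + b * (2 * e - β * F)) - F =
      -β * b ^ 2 * e ^ 3 - β * b * e * Gx - Gx - C * b * e ^ 2 * (2 * e - β * F) := by
    linear_combination (-b * β * e - 1) * hF - e ^ 2 * hCa
  have hK : |(e - C * e ^ 2) * (a + b * (2 * e - β * F)) - F| ≤ K₁ * |e| ^ 3 := by
    rw [hKid]
    have t1 : |(-β) * b ^ 2 * e ^ 3| = |β| * b ^ 2 * |e| ^ 3 := by
      rw [abs_mul, abs_mul, abs_neg, abs_pow, abs_pow, sq_abs]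
    have t2 : |β * b * e * Gx| ≤ |β| * |b| * Cg * |e| ^ 3 := by
      rw [abs_mul, abs_mul, abs_mul]
      calc |β| * |b| * |e| * |Gx| ≤ |β| * |b| * |e| * (Cg * |e| ^ 3) := by gcongr
        _ = |β| * |b| * Cg * (|e| * |e| ^ 3) := by ring
        _ ≤ |β| * |b| * Cg * (1 * |e| ^ 3) := by gcongr <;> positivity
        _ = |β| * |b| * Cg * |e| ^ 3 := by ring
    have t3 : |C * b * e ^ 2 * (2 * e - β * F)| ≤ |C| * |b| * (2 + 2 * |a| * |β|) * |e| ^ 3 := by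
      rw [abs_mul, abs_mul, abs_mul, abs_pow]
      have h2 : |2 * e - β * F| ≤ (2 + 2 * |a| * |β|) * |e| := by
        calc |2 * e - β * F| ≤ |2 * e| + |β * F| := abs_sub _ _
          _ ≤ 2 * |e| + |β| * (2 * |a| * |e|) := by
              rw [abs_mul, abs_mul]; gcongr <;> norm_num
          _ = (2 + 2 * |a| * |β|) * |e| := by ring
      calc |C| * |b| * |e| ^ 2 * |2 * e - β * F|
          ≤ |C| * |b| * |e| ^ 2 * ((2 + 2 * |a| * |β|) * |e|) := by gcongr
        _ = |C| * |b| * (2 + 2 * |a| * |β|) * |e| ^ 3 := by ring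
    calc |(-β) * b ^ 2 * e ^ 3 - β * b * e * Gx - Gx - C * b * e ^ 2 * (2 * e - β * F)|
        ≤ |(-β) * b ^ 2 * e ^ 3| + |β * b * e * Gx| + |Gx| + |C * b * e ^ 2 * (2 * e - β * F)| := by
          have u1 := abs_sub ((-β) * b ^ 2 * e ^ 3 - β * b * e * Gx - Gx) (C * b * e ^ 2 * (2 * e - β * F))
          have u2 := abs_sub ((-β) * b ^ 2 * e ^ 3 - β * b * e * Gx) Gx
          have u3 := abs_sub ((-β) * b ^ 2 * e ^ 3) (β * b * e * Gx)
          linarith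
      _ ≤ |β| * b ^ 2 * |e| ^ 3 + |β| * |b| * Cg * |e| ^ 3 + Cg * |e| ^ 3
            + |C| * |b| * (2 + 2 * |a| * |β|) * |e| ^ 3 := by
          rw [t1]; gcongr
      _ = K₁ * |e| ^ 3 := by rw [hK₁def]; ring
  -- numerator
  have hid : (e - C * e ^ 2) * (F - H) - β * F ^ 2 =
      β * F * ((e - C * e ^ 2) * (a + b * (2 * e - β * F)) - F)
        + (e - C * e ^ 2) * (Gx - Gw) := by
    linear_combination (e - C * e ^ 2) * hDrep
  have hNum : |(e - C * e ^ 2) * (F - H) - β * F ^ 2| ≤ K₂ * (|e| ^ 3 * |e|) := by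
    rw [hid]
    have n1 : |β * F * ((e - C * e ^ 2) * (a + b * (2 * e - β * F)) - F)|
        ≤ |β| * (2 * |a| * |e|) * (K₁ * |e| ^ 3) := by
      rw [abs_mul, abs_mul]
      gcongr
    have n2 : |(e - C * e ^ 2) * (Gx - Gw)| ≤ ((1 + |C|) * |e|) * ((Cg + Ch) * |e| ^ 3) := by
      rw [abs_mul]
      have m1 : |e - C * e ^ 2| ≤ (1 + |C|) * |e| := by
        calc |e - C * e ^ 2| ≤ |e| + |C * e ^ 2| := abs_sub _ _
          _ = |e| + |C| * |e| ^ 2 := by rw [abs_mul, abs_pow]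
          _ ≤ |e| + |C| * |e| := by gcongr
          _ = (1 + |C|) * |e| := by ring
      have m2 : |Gx - Gw| ≤ (Cg + Ch) * |e| ^ 3 := by
        calc |Gx - Gw| ≤ |Gx| + |Gw| := abs_sub _ _
          _ ≤ (Cg + Ch) * |e| ^ 3 := by nlinarith
      have : (0:ℝ) ≤ |Gx - Gw| := abs_nonneg _
      nlinarith [abs_nonneg (e - C * e ^ 2), abs_nonneg C, habs_e]
    calc |β * F * ((e - C * e ^ 2) * (a + b * (2 * e - β * F)) - F)
          + (e - C * e ^ 2) * (Gx - Gw)|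
        ≤ |β * F * ((e - C * e ^ 2) * (a + b * (2 * e - β * F)) - F)|
          + |(e - C * e ^ 2) * (Gx - Gw)| := abs_add_le _ _
      _ ≤ |β| * (2 * |a| * |e|) * (K₁ * |e| ^ 3) + ((1 + |C|) * |e|) * ((Cg + Ch) * |e| ^ 3) := by
          linarith
      _ = K₂ * (|e| ^ 3 * |e|) := by rw [hK₂def]; ring
  -- conclude
  have key : e - C * e ^ 2 - β * F ^ 2 / (F - H) =
      ((e - C * e ^ 2) * (F - H) - β * F ^ 2) / (F - H) := by
    field_simp
  rw [key, abs_div]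
  have hK₂0 : 0 ≤ K₂ := by
    have hk1 : 0 ≤ K₁ := by
      have : 0 ≤ |β| * |b| * Cg := by positivity
      have : 0 ≤ |C| * |b| * (2 + 2 * |a| * |β|) := by positivity
      have : 0 ≤ |β| * b ^ 2 := by positivity
      rw [hK₁def]; nlinarith
    rw [hK₂def]
    exact add_nonneg (mul_nonneg (by positivity) hk1) (by positivity)
  have hq' : (0:ℝ) < |β| * a ^ 2 / 8 * |e| := by positivity
  calc |(e - C * e ^ 2) * (F - H) - β * F ^ 2| / |F - H|
      ≤ (K₂ * (|e| ^ 3 * |e|)) / (|β| * a ^ 2 / 8 * |e|) := by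
        gcongr
    _ = (K₂ * |e| ^ 3) * |e| / ((|β| * a ^ 2 / 8) * |e|) := by ring_nf
    _ = (K₂ * |e| ^ 3) / (|β| * a ^ 2 / 8) := by
        rw [mul_div_mul_right _ _ habs_e.ne']
    _ = K₂ / (|β| * a ^ 2 / 8) * |e| ^ 3 := by ring

lemma taylor_order_two {f : ℝ → ℝ} {α : ℝ} (hf : ContDiffAt ℝ 3 f α) :
    (fun x => f x - f α - deriv f α * (x - α) - deriv (deriv f) α / 2 * (x - α) ^ 2)
      =O[nhds α] fun x => (x - α) ^ 3 := by
  obtain ⟨u, hu, hfu⟩ := hf.contDiffOn (le_refl 3) (by simp)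
  obtain ⟨t, htu, hto, hαt⟩ := mem_nhds_iff.1 hu
  have hft : ContDiffOn ℝ 3 f t := hfu.mono htu
  have hd1 : ContDiffOn ℝ 2 (deriv f) t := hft.deriv_of_isOpen hto (by norm_num)
  have hd2 : ContDiffOn ℝ 1 (deriv (deriv f)) t := hd1.deriv_of_isOpen hto (by norm_num)
  have htmem : ∀ᶠ x in nhds α, x ∈ t := eventually_of_mem (hto.mem_nhds hαt) fun x hx => hx
  have hdf : ∀ᶠ x in nhds α, HasDerivAt f (deriv f x) x := htmem.mono fun x hx =>
    (((hft.differentiableOn (by norm_num)).differentiableAt (hto.mem_nhds hx))).hasDerivAt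
  have hddf : ∀ᶠ x in nhds α, HasDerivAt (deriv f) (deriv (deriv f) x) x := htmem.mono fun x hx =>
    (((hd1.differentiableOn (by norm_num)).differentiableAt (hto.mem_nhds hx))).hasDerivAt
  have h3 : DifferentiableAt ℝ (deriv (deriv f)) α :=
    (hd2.differentiableOn one_ne_zero).differentiableAt (hto.mem_nhds hαt)
  have hO1 : (fun x => deriv (deriv f) x - deriv (deriv f) α) =O[nhds α]
      fun x => (x - α) ^ 1 := by simpa using h3.isBigO_sub
  have h2O : (fun x => deriv f x - deriv f α - deriv (deriv f) α * (x - α)) =O[nhds α]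
      fun x => (x - α) ^ 2 := by
    have := mvt_bigO (h' := fun x => deriv (deriv f) x - deriv (deriv f) α)
      (hddf.mono fun x hx => by
        have h1 : HasDerivAt (fun y : ℝ => deriv f α + deriv (deriv f) α * (y - α))
            (deriv (deriv f) α) x := by
          simpa using (((hasDerivAt_id x).sub_const α).const_mul (deriv (deriv f) α)).const_add
            (deriv f α)
        simpa [sub_sub] using hx.sub h1)
      (by simp) hO1
    simpa [sub_sub, Pi.sub_def] using this
  have := mvt_bigO (h' := fun x => deriv f x - deriv f α - deriv (deriv f) α * (x - α))
    (hdf.mono fun x hx => by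
      have h1 : HasDerivAt (fun y : ℝ => (y - α)) 1 x := (hasDerivAt_id x).sub_const α
      have h2 : HasDerivAt (fun y : ℝ => (y - α) ^ 2) (2 * (x - α)) x := by
        simpa using h1.fun_pow 2
      have := ((hx.sub_const (f α)).sub (h1.const_mul (deriv f α))).sub
        (h2.const_mul (deriv (deriv f) α / 2))
      exact this.congr_deriv (by ring))
    (by simp) h2O
  simpa [Pi.sub_def] using this

theorem stmt_11 (f : ℝ → ℝ) (α β c₂ : ℝ) (hβ : β ≠ 0)
    (hf : ContDiffAt ℝ 3 f α) (hfα : f α = 0) (hf' : deriv f α ≠ 0)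
    (hc₂ : c₂ = iteratedDeriv 2 f α / (2 * deriv f α))
    (w y : ℝ → ℝ)
    (hw : ∀ x : ℝ, w x = x - β * f x)
    (hy : ∀ x : ℝ, y x = x - β * (f x) ^ 2 / (f x - f (w x))) :
    ((fun x : ℝ => y x - α - (1 - β * deriv f α) * c₂ * (x - α) ^ 2) =O[nhds α]
      fun x : ℝ => (x - α) ^ 3) ∧
    (β = 1 / deriv f α → (1 - β * deriv f α) * c₂ = 0) := by
  constructor
  · set a : ℝ := deriv f α with hadef
    set b : ℝ := deriv (deriv f) α / 2 with hbdef
    set C : ℝ := (1 - β * a) * c₂ with hCdef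
    have hit : iteratedDeriv 2 f α = deriv (deriv f) α := by
      rw [show (2 : ℕ) = 1 + 1 from rfl, iteratedDeriv_succ, iteratedDeriv_one]
    have hCa : C * a = (1 - β * a) * b := by
      rw [hCdef, hc₂, hit, hbdef]
      field_simp
    -- the remainder G
    set G : ℝ → ℝ := fun x => f x - a * (x - α) - b * (x - α) ^ 2 with hGdef
    have hG : G =O[nhds α] fun x => (x - α) ^ 3 := by
      have := taylor_order_two hf
      rw [hfα] at this
      apply this.congr_left
      intro x
      rw [hGdef, hadef, hbdef]
      ring
    -- f is O(x - α)
    have hfd : DifferentiableAt ℝ f α := hf.differentiableAt (by norm_num)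
    have hfO : f =O[nhds α] fun x => x - α := by
      have := hfd.isBigO_sub
      rw [hfα] at this
      simpa using this
    -- w tends to α
    have hwt : Tendsto w (nhds α) (nhds α) := by
      have hcont : ContinuousAt w α := by
        have : ContinuousAt (fun x => x - β * f x) α :=
          continuousAt_id.sub (continuousAt_const.mul hfd.continuousAt)
        apply this.congr
        filter_upwards with x using (hw x).symm
      have hwα : w α = α := by rw [hw α, hfα]; ring
      have := hcont.tendsto
      rw [hwα] at this
      exact this
    -- G ∘ w is O((x-α)^3)
    have hwO : (fun x => w x - α) =O[nhds α] fun x => x - α := by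
      have h1 : (fun x => w x - α) = fun x => (x - α) - β * f x := by
        funext x; rw [hw x]; ring
      rw [h1]
      exact (isBigO_refl _ _).sub (hfO.const_mul_left β)
    have hGw : (fun x => G (w x)) =O[nhds α] fun x => (x - α) ^ 3 :=
      (hG.comp_tendsto hwt).trans (hwO.pow 3)
    -- extract constants
    obtain ⟨Cg, hCg0, hCgw⟩ := hG.exists_pos
    obtain ⟨Ch, hCh0, hChw⟩ := hGw.exists_pos
    have hCgb := hCgw.bound
    have hChb := hChw.bound
    have ha : a ≠ 0 := hf'
    have ha' : (0:ℝ) < |a| := abs_pos.2 ha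
    have hβ' : (0:ℝ) < |β| := abs_pos.2 hβ
    have ha2 : (0:ℝ) < a ^ 2 := by
      have := sq_abs a; nlinarith
    -- smallness eventualities
    have habs : Tendsto (fun x : ℝ => |x - α|) (nhds α) (nhds 0) := by
      have : Tendsto (fun x : ℝ => x - α) (nhds α) (nhds 0) :=
        (by fun_prop : Continuous fun x : ℝ => x - α).tendsto' α 0 (by ring)
      simpa using this.abs
    have hq1 : ∀ᶠ x in nhds α, |x - α| ≤ 1 :=
      habs.eventually_le_const one_pos
    have hq2 : ∀ᶠ x in nhds α, (|b| + Cg) * |x - α| ≤ |a| / 2 := by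
      have ht : Tendsto (fun x : ℝ => (|b| + Cg) * |x - α|) (nhds α) (nhds 0) := by
        simpa using habs.const_mul (|b| + Cg)
      exact ht.eventually_le_const (by positivity)
    have hq3 : ∀ᶠ x in nhds α, |b| * (2 + 2 * |a| * |β|) * |x - α| ≤ |a| / 2 := by
      have ht : Tendsto (fun x : ℝ => |b| * (2 + 2 * |a| * |β|) * |x - α|) (nhds α) (nhds 0) := by
        simpa using habs.const_mul (|b| * (2 + 2 * |a| * |β|))
      exact ht.eventually_le_const (by positivity)
    have hq4 : ∀ᶠ x in nhds α, (Cg + Ch) * |x - α| ^ 2 ≤ |β| * a ^ 2 / 8 := by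
      have ht : Tendsto (fun x : ℝ => (Cg + Ch) * |x - α| ^ 2) (nhds α) (nhds 0) := by
        have := (habs.pow 2).const_mul (Cg + Ch)
        simpa using this
      exact ht.eventually_le_const (by positivity)
    rw [isBigO_iff]
    refine ⟨(|β| * (2 * |a|) * (|β| * b ^ 2 + |β| * |b| * Cg + Cg + |C| * |b| * (2 + 2 * |a| * |β|))
          + (1 + |C|) * (Cg + Ch)) / (|β| * a ^ 2 / 8), ?_⟩
    filter_upwards [hCgb, hChb, hq1, hq2, hq3, hq4] with x hGx hGwx q1 q2 q3 q4
    rcases eq_or_ne x α with rfl | hxa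
    · simp [hy x, hfα]
    · have he : x - α ≠ 0 := sub_ne_zero.2 hxa
      have hGx' : |G x| ≤ Cg * |x - α| ^ 3 := by
        simpa [abs_pow] using hGx
      have hGw' : |G (w x)| ≤ Ch * |x - α| ^ 3 := by
        simpa [abs_pow] using hGwx
      have hFeq : f x = a * (x - α) + b * (x - α) ^ 2 + G x := by
        rw [hGdef]; ring
      have hweq : w x - α = (x - α) - β * f x := by rw [hw x]; ring
      have hHeq : f (w x) = a * ((x - α) - β * f x) + b * ((x - α) - β * f x) ^ 2 + G (w x) := by
        have : f (w x) = a * (w x - α) + b * (w x - α) ^ 2 + G (w x) := by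
          rw [hGdef]; ring
        rw [this, hweq]
      have hmain := pointwise_est a b β C Cg Ch (x - α) (f x) (f (w x)) (G x) (G (w x))
        ha hβ hCa hFeq hHeq hGx' hGw' hCg0.le hCh0.le he q1 q2 q3 q4
      have hlhs : y x - α - C * (x - α) ^ 2 =
          (x - α) - C * (x - α) ^ 2 - β * (f x) ^ 2 / (f x - f (w x)) := by
        rw [hy x]; ring
      rw [Real.norm_eq_abs, Real.norm_eq_abs, hlhs, abs_pow]
      exact hmain
  · intro h
    rw [h, one_div, inv_mul_cancel₀ hf', sub_self, zero_mul]
end
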